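/- If f is a C¹ complex-valued function on ℝ^d and A : ℝ^d → ℝ^d is a C¹ vector field, then the magnetic gradient ∇_A f := (∂f/∂x_k − i A_k f)_{k=1..d} satisfies |∇_A f(x)| ≥ |∇|f|(x)| at almost every x (the diamagnetic inequality). -/

import Mathlib

open MeasureTheory

lemma euclid_decomp {d : ℕ} (v : EuclideanSpace ℝ (Fin d)) :
    v = ∑ k : Fin d, v k • EuclideanSpace.single k (1:ℝ) := by
  have := (EuclideanSpace.basisFun (Fin d) ℝ).sum_repr v
  simpa [EuclideanSpace.basisFun_apply, EuclideanSpace.basisFun_repr, eq_comm] using this.symm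

/-- **Diamagnetic inequality.** If `f : ℝ^d → ℂ` is `C¹` and `A : ℝ^d → ℝ^d` is a `C¹`
magnetic potential, then the magnetic gradient `∇_A f = (∂f/∂x_k − i A_k f)_k` satisfies
`|∇_A f(x)| ≥ |∇|f|(x)|` for almost every `x`. -/
theorem stmt_0 (d : ℕ) (f : EuclideanSpace ℝ (Fin d) → ℂ)
    (A : EuclideanSpace ℝ (Fin d) → EuclideanSpace ℝ (Fin d))
    (hf : ContDiff ℝ 1 f) (hA : ContDiff ℝ 1 A) :
    ∀ᵐ x : EuclideanSpace ℝ (Fin d),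
      ‖fderiv ℝ (fun y => ‖f y‖) x‖ ≤
        ‖(WithLp.equiv 2 (Fin d → ℂ)).symm
            (fun k : Fin d => fderiv ℝ f x (EuclideanSpace.single k 1) -
              Complex.I * (A x k : ℂ) * f x)‖ := by
  refine Filter.Eventually.of_forall (fun x => ?_)
  set g : Fin d → ℂ := fun k => fderiv ℝ f x (EuclideanSpace.single k 1) -
      Complex.I * (A x k : ℂ) * f x with hg
  by_cases hfx : f x = 0
  · have h0 : fderiv ℝ (fun y => ‖f y‖) x = 0 := by
      by_cases hd : DifferentiableAt ℝ (fun y => ‖f y‖) x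
      · have hmin : IsLocalMin (fun y => ‖f y‖) x :=
          Filter.Eventually.of_forall (fun y => by simp [hfx])
        exact hmin.fderiv_eq_zero
      · exact fderiv_zero_of_not_differentiableAt hd
    rw [h0, norm_zero]
    exact norm_nonneg _
  · have hDf : DifferentiableAt ℝ f x := (hf.differentiable one_ne_zero) x
    have hF : HasFDerivAt f (fderiv ℝ f x) x := hDf.hasFDerivAt
    set F := fderiv ℝ f x with hFdef
    have hre : HasFDerivAt (fun y => (f y).re) (Complex.reCLM.comp F) x :=
      Complex.reCLM.hasFDerivAt.comp x hF
    have him : HasFDerivAt (fun y => (f y).im) (Complex.imCLM.comp F) x :=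
      Complex.imCLM.hasFDerivAt.comp x hF
    -- q y = normSq (f y)
    have hq : HasFDerivAt (fun y => (f y).re * (f y).re + (f y).im * (f y).im)
        (((f x).re • Complex.reCLM.comp F + (f x).re • Complex.reCLM.comp F) +
         ((f x).im • Complex.imCLM.comp F + (f x).im • Complex.imCLM.comp F)) x :=
      (hre.mul hre).add (him.mul him)
    have hqx : (f x).re * (f x).re + (f x).im * (f x).im = Complex.normSq (f x) := by
      simp [Complex.normSq_apply]
    have hqne : (f x).re * (f x).re + (f x).im * (f x).im ≠ 0 := by
      rw [hqx]; exact fun h => hfx (Complex.normSq_eq_zero.mp h)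
    have hsq := (Real.hasDerivAt_sqrt hqne).comp_hasFDerivAt x hq
    have hnormf : Real.sqrt ((f x).re * (f x).re + (f x).im * (f x).im) = ‖f x‖ := by
      rw [hqx, Complex.norm_def]
    have hNeq : (fun y => ‖f y‖) =
        (fun y => Real.sqrt ((f y).re * (f y).re + (f y).im * (f y).im)) := by
      funext y
      rw [Complex.norm_def, Complex.normSq_apply]
    set L := (1 / (2 * Real.sqrt ((f x).re * (f x).re + (f x).im * (f x).im))) •
        (((f x).re • Complex.reCLM.comp F + (f x).re • Complex.reCLM.comp F) +
         ((f x).im • Complex.imCLM.comp F + (f x).im • Complex.imCLM.comp F)) with hL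
    have hfd : fderiv ℝ (fun y => ‖f y‖) x = L := by
      rw [hNeq]
      exact hsq.fderiv
    rw [hfd]
    refine ContinuousLinearMap.opNorm_le_bound _ (norm_nonneg _) (fun v => ?_)
    -- compute L v
    have hfxnorm : (0:ℝ) < ‖f x‖ := norm_pos_iff.mpr hfx
    have hLv : L v = ((starRingEnd ℂ) (f x) * F v).re / ‖f x‖ := by
      simp only [hL, ContinuousLinearMap.smul_apply, ContinuousLinearMap.add_apply,
        ContinuousLinearMap.coe_smul', Pi.smul_apply, ContinuousLinearMap.coe_comp',
        Function.comp_apply, Complex.reCLM_apply, Complex.imCLM_apply, smul_eq_mul, hnormf,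
        Complex.mul_re, Complex.conj_re, Complex.conj_im]
      field_simp
      ring
    -- F v as sum
    have hFv : F v = ∑ k : Fin d, (v k : ℂ) * F (EuclideanSpace.single k 1) := by
      conv_lhs => rw [euclid_decomp v]
      rw [map_sum]
      simp [Complex.real_smul]
    set w : ℂ := ∑ k : Fin d, (v k : ℂ) * g k with hw
    set c : ℝ := ∑ k : Fin d, v k * A x k with hc
    have hsum : ∑ k : Fin d, (v k : ℂ) * (Complex.I * ((A x k : ℝ) : ℂ) * f x)
        = Complex.I * (c : ℂ) * f x := by
      rw [hc]
      push_cast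
      rw [Finset.mul_sum, Finset.sum_mul]
      apply Finset.sum_congr rfl
      intro k _
      ring
    have hwFv : F v = w + Complex.I * (c : ℂ) * f x := by
      rw [hw, hg]
      simp only [mul_sub]
      rw [Finset.sum_sub_distrib, ← hFv, hsum]
      ring
    have hre0 : ((starRingEnd ℂ) (f x) * (Complex.I * (c : ℂ) * f x)).re = 0 := by
      simp [Complex.mul_re, Complex.mul_im, Complex.conj_re, Complex.conj_im]
      ring
    have hrew : ((starRingEnd ℂ) (f x) * F v).re = ((starRingEnd ℂ) (f x) * w).re := by
      rw [hwFv, mul_add, Complex.add_re, hre0, add_zero]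
    -- Cauchy-Schwarz
    set V : EuclideanSpace ℂ (Fin d) := (WithLp.equiv 2 (Fin d → ℂ)).symm (fun k => (v k : ℂ)) with hV
    set G : EuclideanSpace ℂ (Fin d) := (WithLp.equiv 2 (Fin d → ℂ)).symm g with hG
    have hinner : (inner ℂ V G : ℂ) = w := by
      rw [hw]
      simp [PiLp.inner_apply, RCLike.inner_apply, hV, hG, Complex.conj_ofReal, mul_comm]
    have hVnorm : ‖V‖ = ‖v‖ := by
      rw [EuclideanSpace.norm_eq, EuclideanSpace.norm_eq]
      congr 1
      apply Finset.sum_congr rfl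
      intro k _
      simp [hV]
    have hwbound : ‖w‖ ≤ ‖v‖ * ‖G‖ := by
      rw [← hinner, ← hVnorm]
      exact norm_inner_le_norm V G
    have h1 : |((starRingEnd ℂ) (f x) * w).re| ≤ ‖f x‖ * ‖w‖ := by
      calc |((starRingEnd ℂ) (f x) * w).re| ≤ ‖(starRingEnd ℂ) (f x) * w‖ :=
            Complex.abs_re_le_norm _
        _ = ‖f x‖ * ‖w‖ := by
            rw [norm_mul, Complex.norm_conj]
    rw [Real.norm_eq_abs, hLv, hrew, abs_div, abs_of_pos hfxnorm, div_le_iff₀ hfxnorm]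
    calc |((starRingEnd ℂ) (f x) * w).re| ≤ ‖f x‖ * ‖w‖ := h1
      _ ≤ ‖f x‖ * (‖v‖ * ‖G‖) := by
          exact mul_le_mul_of_nonneg_left hwbound (le_of_lt hfxnorm)
      _ = ‖G‖ * ‖v‖ * ‖f x‖ := by ring
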